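/- Let α ∈ [0,1] be a real number and let ℤ_n be the cyclic group of order n ≥ 3. Then αn − 1 is an eigenvalue of A_α(P(ℤ_n)) whose eigenspace has dimension at least φ(n), where φ is Euler's totient function. -/

import Mathlib

open Matrix Polynomial BigOperators

/-- The generalized adjacency matrix `A_α(G) = α·D(G) + (1−α)·A(G)`. -/
noncomputable def Aalpha {V : Type*} [Fintype V] (G : SimpleGraph V) (α : ℝ) :
    Matrix V V ℝ :=
  letI := Classical.decEq V
  letI := Classical.decRel G.Adj
  α • Matrix.diagonal (fun v => (G.degree v : ℝ)) + (1 - α) • G.adjMatrix ℝ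

/-- `μ` is an eigenvalue of the real matrix `M`. -/
def Matrix.IsEigenvalue {n : Type*} [Fintype n] (M : Matrix n n ℝ) (μ : ℝ) : Prop :=
  ∃ v : n → ℝ, v ≠ 0 ∧ M.mulVec v = μ • v

/-- The dimension of the eigenspace of a real matrix `M` for the value `μ`. -/
noncomputable def eigMult {n : Type*} [Fintype n] (M : Matrix n n ℝ) (μ : ℝ) : ℕ :=
  letI := Classical.decEq n
  Module.finrank ℝ (Module.End.eigenspace (Matrix.toLin' M) μ)

/-- The joined union `G[G_1, …, G_n]`. -/
def joinedUnion {n : ℕ} (G : SimpleGraph (Fin n)) (V : Fin n → Type*)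
    (Gs : ∀ i, SimpleGraph (V i)) : SimpleGraph (Σ i, V i) :=
  SimpleGraph.fromRel (fun x y =>
    if h : x.1 = y.1 then (Gs y.1).Adj (h ▸ x.2) y.2 else G.Adj x.1 y.1)

/-- The join `G ∇ H` of two graphs. -/
def graphJoin {V W : Type*} (G : SimpleGraph V) (H : SimpleGraph W) :
    SimpleGraph (V ⊕ W) :=
  SimpleGraph.fromRel (fun x y =>
    match x, y with
    | Sum.inl a, Sum.inl b => G.Adj a b
    | Sum.inr a, Sum.inr b => H.Adj a b
    | _, _ => True)

/-- The disjoint union `G ∪ H` of two graphs. -/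
def disjUnion {V W : Type*} (G : SimpleGraph V) (H : SimpleGraph W) :
    SimpleGraph (V ⊕ W) :=
  SimpleGraph.fromRel (fun x y =>
    match x, y with
    | Sum.inl a, Sum.inl b => G.Adj a b
    | Sum.inr a, Sum.inr b => H.Adj a b
    | _, _ => False)

/-- Degree of a vertex (classical version). -/
noncomputable def gdegree {V : Type*} [Fintype V] (G : SimpleGraph V) (v : V) : ℕ :=
  letI := Classical.decEq V
  letI := Classical.decRel G.Adj
  G.degree v

/-- The power graph of a group. -/
def powerGraph (G : Type*) [Group G] : SimpleGraph G :=
  SimpleGraph.fromRel (fun x y => ∃ k : ℕ, 0 < k ∧ y = x ^ k)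

lemma deg_dom {V : Type*} [Fintype V] [DecidableEq V] (G : SimpleGraph V) [DecidableRel G.Adj]
    (a : V) (ha : ∀ y, y ≠ a → G.Adj a y) : G.degree a = Fintype.card V - 1 := by
  rw [← SimpleGraph.card_neighborFinset_eq_degree]
  have : G.neighborFinset a = Finset.univ.erase a := by
    ext y
    simp only [SimpleGraph.mem_neighborFinset, Finset.mem_erase, Finset.mem_univ, and_true]
    exact ⟨fun h => h.ne', fun h => ha y h⟩
  rw [this, Finset.card_erase_of_mem (Finset.mem_univ a), Finset.card_univ]

lemma aalpha_col {V : Type*} [Fintype V] [DecidableEq V] (G : SimpleGraph V) (α : ℝ)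
    (c : V) (hc : ∀ y, y ≠ c → G.Adj c y) (x : V) :
    Aalpha G α x c = if x = c then α * ((Fintype.card V : ℝ) - 1) else (1 - α) := by
  classical
  have hcast : ((Fintype.card V - 1 : ℕ) : ℝ) = (Fintype.card V : ℝ) - 1 := by
    have : 1 ≤ Fintype.card V := Fintype.card_pos_iff.mpr ⟨c⟩
    push_cast [Nat.cast_sub this]
    ring
  unfold Aalpha
  simp only [Matrix.add_apply, Matrix.smul_apply, Matrix.diagonal_apply,
    SimpleGraph.adjMatrix_apply, smul_eq_mul]
  by_cases hx : x = c
  · subst hx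
    rw [if_pos rfl, if_pos rfl, if_neg (G.irrefl), deg_dom G x hc, hcast]
    ring
  · rw [if_neg hx, if_neg hx, if_pos ((hc x hx).symm)]
    ring

lemma key_eigvec {V : Type*} [Fintype V] [DecidableEq V] (G : SimpleGraph V) (α : ℝ)
    (a b : V) (hab : a ≠ b)
    (ha : ∀ y, y ≠ a → G.Adj a y) (hb : ∀ y, y ≠ b → G.Adj b y) :
    (Aalpha G α).mulVec (Pi.single a 1 - Pi.single b 1)
      = (α * (Fintype.card V : ℝ) - 1) • (Pi.single a 1 - Pi.single b 1) := by
  classical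
  funext x
  rw [Matrix.mulVec_sub]
  simp only [Matrix.mulVec_single_one, Matrix.col_apply, Pi.sub_apply, Pi.smul_apply, mul_one, smul_eq_mul,
    Pi.single_apply, aalpha_col G α a ha, aalpha_col G α b hb]
  by_cases hxa : x = a
  · subst hxa
    rw [if_pos rfl, if_pos rfl, if_neg hab, if_neg hab]
    ring
  · by_cases hxb : x = b
    · subst hxb
      rw [if_neg hxa, if_neg hxa, if_pos rfl, if_pos rfl]
      ring
    · rw [if_neg hxa, if_neg hxa, if_neg hxb, if_neg hxb]
      ring

lemma gen_dom (n : ℕ) [NeZero n] (hn : 3 ≤ n) (u : (ZMod n)ˣ)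
    (y : Multiplicative (ZMod n)) (hy : y ≠ Multiplicative.ofAdd (u : ZMod n)) :
    (powerGraph (Multiplicative (ZMod n))).Adj (Multiplicative.ofAdd (u : ZMod n)) y := by
  set x : Multiplicative (ZMod n) := Multiplicative.ofAdd (u : ZMod n)
  refine ⟨hy.symm, Or.inl ?_⟩
  by_cases h0 : y.toAdd = 0
  · refine ⟨n, by omega, ?_⟩
    apply Multiplicative.toAdd.injective
    rw [toAdd_pow, h0]
    show (0 : ZMod n) = n • (u : ZMod n)
    rw [nsmul_eq_mul, ZMod.natCast_self, zero_mul]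
  · set b : ZMod n := (u⁻¹ : (ZMod n)ˣ) * y.toAdd with hbdef
    have key : ((u : (ZMod n)ˣ) : ZMod n) * b = y.toAdd := by
      rw [hbdef, ← mul_assoc]; simp
    have hb : b ≠ 0 := fun h => h0 (by rw [← key, h, mul_zero])
    refine ⟨b.val, ?_, ?_⟩
    · have := (ZMod.val_eq_zero b).not.mpr hb
      omega
    · apply Multiplicative.toAdd.injective
      rw [toAdd_pow]
      show Multiplicative.toAdd y = b.val • (u : ZMod n)
      rw [nsmul_eq_mul, ZMod.natCast_zmod_val, mul_comm, key]

lemma one_dom (n : ℕ) [NeZero n] (y : Multiplicative (ZMod n)) (hy : y ≠ 1) :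
    (powerGraph (Multiplicative (ZMod n))).Adj 1 y :=
  ⟨hy.symm, Or.inr ⟨Fintype.card (Multiplicative (ZMod n)), Fintype.card_pos,
    (pow_card_eq_one).symm⟩⟩


/-- `αn − 1` is an eigenvalue of the power graph of the cyclic group
of order `n ≥ 3` with eigenspace of dimension at least `φ(n)`. -/
theorem stmt_13 {α : ℝ} (hα : α ∈ Set.Icc (0 : ℝ) 1)
    (n : ℕ) [NeZero n] (hn : 3 ≤ n) :
    Nat.totient n ≤
      eigMult (Aalpha (powerGraph (Multiplicative (ZMod n))) α) (α * (n : ℝ) - 1) := by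
  haveI : Fact (1 < n) := ⟨by omega⟩
  set G := Multiplicative (ZMod n) with hG
  set P := powerGraph G with hP
  set M := Aalpha P α with hM
  have hcard : (Fintype.card G : ℕ) = n :=
    (Fintype.card_multiplicative (ZMod n)).trans (ZMod.card n)
  set g : (ZMod n)ˣ → G := fun u => Multiplicative.ofAdd (u : ZMod n) with hg
  have hginj : Function.Injective g := by
    intro u w h
    exact Units.ext (Multiplicative.ofAdd.injective h)
  have hg1 : ∀ u, g u ≠ 1 := by
    intro u h
    exact u.ne_zero (Multiplicative.ofAdd.injective h)
  set v : (ZMod n)ˣ → (G → ℝ) := fun u => Pi.single (g u) 1 - Pi.single 1 1 with hv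
  have hev : ∀ u, M.mulVec (v u) = (α * (n : ℝ) - 1) • (v u) := by
    intro u
    have := key_eigvec P α (g u) 1 (hg1 u)
      (fun y hy => gen_dom n hn u y hy) (fun y hy => one_dom n y hy)
    rw [hv]
    rw [this]
    rw [hcard]
  -- linear independence of v
  have hli0 : LinearIndependent ℝ v := by
    rw [Fintype.linearIndependent_iff]
    intro c hc u
    have h := congrFun hc (g u)
    simp only [Finset.sum_apply, Pi.smul_apply, hv, Pi.sub_apply, Pi.single_apply,
      Pi.zero_apply, smul_eq_mul, if_neg (hg1 u), sub_zero, hginj.eq_iff] at h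
    simpa only [mul_ite, mul_one, mul_zero, Finset.sum_ite_eq, Finset.mem_univ,
      if_true] using h
  classical
  unfold eigMult
  set E := Module.End.eigenspace (Matrix.toLin' M) (α * (n : ℝ) - 1) with hE
  have hmem : ∀ u, v u ∈ E := by
    intro u
    rw [hE, Module.End.mem_eigenspace_iff, Matrix.toLin'_apply]
    exact hev u
  set f : (ZMod n)ˣ → E := fun u => ⟨v u, hmem u⟩ with hf
  have hli : LinearIndependent ℝ f := by
    apply LinearIndependent.of_comp E.subtype
    exact hli0
  have := hli.fintype_card_le_finrank
  rwa [ZMod.card_units_eq_totient] at this
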